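/- The competitive ratio of BlindOracle is at most min(1 + 2ε, 2 + 4ε/(k−1)), where ε = η/OPT; i.e., ALG_B ≤ min(1 + 2η/OPT, 2 + (4/(k−1))·η/OPT)·OPT. -/

import Mathlib

/-- Given the lemmas ALG_B ≤ OPT + M, (k−1)·ALG_B ≤ 2(k−1)·OPT + 2M,
and η ≥ M/2, BlindOracle's competitive ratio is at most
min(1 + 2η/OPT, 2 + (4/(k−1))·η/OPT). -/
theorem blindoracle_competitive_ratio
    (k : ℕ) (hk : 2 ≤ k)
    (ALGB OPT M η : ℝ)
    (hOPT : OPT > 0) (hMnn : 0 ≤ M)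
    (h1 : ALGB ≤ OPT + M)
    (h2 : ((k : ℝ) - 1) * ALGB ≤ 2 * ((k : ℝ) - 1) * OPT + 2 * M)
    (hη : η ≥ M / 2) :
    ALGB ≤ min (1 + 2 * η / OPT) (2 + (4 / ((k : ℝ) - 1)) * (η / OPT)) * OPT := by
  have hkr : (1 : ℝ) ≤ (k : ℝ) := by exact_mod_cast Nat.one_le_of_lt hk
  have hk1 : (0 : ℝ) < (k : ℝ) - 1 := by
    have : (2 : ℝ) ≤ (k : ℝ) := by exact_mod_cast hk
    linarith
  rw [min_mul_of_nonneg _ _ hOPT.le, le_min_iff]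
  constructor
  · have : (1 + 2 * η / OPT) * OPT = OPT + 2 * η := by field_simp
    rw [this]; linarith
  · have : (2 + 4 / ((k : ℝ) - 1) * (η / OPT)) * OPT = 2 * OPT + 4 * η / ((k : ℝ) - 1) := by
      field_simp
    rw [this, show 2 * OPT + 4 * η / ((k : ℝ) - 1)
        = (2 * OPT * ((k : ℝ) - 1) + 4 * η) / ((k : ℝ) - 1) from by field_simp,
      le_div_iff₀ hk1]
    nlinarith
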